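/- Conformal decomposition into primitive elements: for any integer matrix $A \in \mathbb{Z}^{d\times m}$, every nonzero $z \in \ker_{\mathbb{Z}}(A)$ can be written as a finite sum $z = g_1 + \dots + g_r$ of primitive elements $g_i \in \ker_{\mathbb{Z}}(A)$ each conformal to $z$ (i.e., for every coordinate $j$, $g_i^{(j)} z^{(j)} \ge 0$ and $|g_i^{(j)}| \le |z^{(j)}|$). -/
import Mathlib


/-- `g` is conformal to `z`: componentwise same signs and no larger absolute value. -/
def ConformalTo {m : ℕ} (g z : Fin m → ℤ) : Prop :=
  ∀ j, 0 ≤ g j * z j ∧ |g j| ≤ |z j|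

/-- A primitive (Graver basis) element of the integer kernel of `A`. -/
def PrimitiveKer {d m : ℕ} (A : Matrix (Fin d) (Fin m) ℤ) (g : Fin m → ℤ) : Prop :=
  A.mulVec g = 0 ∧ g ≠ 0 ∧
    ∀ g' : Fin m → ℤ, A.mulVec g' = 0 → g' ≠ 0 → g' ≠ g → ¬ ConformalTo g' g

private lemma conf_sub_sign {a b : ℤ} (h1 : 0 ≤ a*b) (h2 : |a| ≤ |b|) : 0 ≤ (b-a)*b := by
  rcases abs_cases a with ⟨_,ha⟩|⟨_,ha⟩ <;> rcases abs_cases b with ⟨_,hb⟩|⟨_,hb⟩ <;> nlinarith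

private lemma conf_sub_abs {a b : ℤ} (h1 : 0 ≤ a*b) (h2 : |a| ≤ |b|) : |b-a| ≤ |b| := by
  rw [abs_le] at *
  rcases abs_cases a with ⟨ea,ha⟩|⟨ea,ha⟩ <;> rcases abs_cases b with ⟨eb,hb⟩|⟨eb,hb⟩ <;>
    constructor <;> nlinarith

private lemma conf_sub_lt {a b : ℤ} (h1 : 0 ≤ a*b) (h2 : |a| ≤ |b|) (ha : a ≠ 0) :
    |b-a| < |b| := by
  rcases abs_cases a with ⟨ea,ha'⟩|⟨ea,ha'⟩ <;> rcases abs_cases b with ⟨eb,hb⟩|⟨eb,hb⟩ <;>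
    rcases abs_cases (b-a) with ⟨e,h⟩|⟨e,h⟩ <;>
    rw [ea, eb] at h2 <;> rw [e, eb] <;> rcases ha.lt_or_gt with h0|h0 <;> nlinarith

private lemma conf_trans_sign {a b c : ℤ} (h1 : 0 ≤ a*b) (h2 : |a| ≤ |b|) (h3 : 0 ≤ b*c) :
    0 ≤ a*c := by
  rcases eq_or_ne b 0 with rfl|hb
  · simp at h2
    have : a = 0 := by omega
    simp [this]
  · nlinarith [mul_nonneg h1 h3, mul_self_pos.mpr hb]

private lemma conf_strict {a b : ℤ} (h1 : 0 ≤ a*b) (h2 : |a| ≤ |b|) (hab : a ≠ b) :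
    |a| < |b| := by
  rcases h2.lt_or_eq with h|h
  · exact h
  · rcases abs_eq_abs.mp h with rfl|rfl
    · exact absurd rfl hab
    · have : b = 0 := by nlinarith
      simp [this] at hab

private lemma ConformalTo.trans' {m : ℕ} {a b c : Fin m → ℤ}
    (hab : ConformalTo a b) (hbc : ConformalTo b c) : ConformalTo a c := by
  intro j
  obtain ⟨h1, h2⟩ := hab j
  obtain ⟨h3, h4⟩ := hbc j
  exact ⟨conf_trans_sign h1 h2 h3, h2.trans h4⟩

private lemma key {d m : ℕ} (A : Matrix (Fin d) (Fin m) ℤ) :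
    ∀ n : ℕ, ∀ z : Fin m → ℤ, (∑ j, (z j).natAbs) ≤ n → A.mulVec z = 0 → z ≠ 0 →
    ∃ (r : ℕ) (gs : Fin r → Fin m → ℤ),
      z = ∑ i, gs i ∧ ∀ i, PrimitiveKer A (gs i) ∧ ConformalTo (gs i) z := by
  intro n
  induction n with
  | zero =>
    intro z hw hk hz0
    exfalso; apply hz0; funext j
    have := (Finset.sum_eq_zero_iff.mp (Nat.le_zero.mp hw)) j (Finset.mem_univ j)
    show z j = 0
    omega
  | succ n ih =>
    intro z hw hk hz0
    by_cases hp : PrimitiveKer A z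
    · refine ⟨1, fun _ => z, by simp, fun _ => ⟨hp, fun j => ⟨mul_self_nonneg _, le_refl _⟩⟩⟩
    · have hC : ¬ ∀ g' : Fin m → ℤ, A.mulVec g' = 0 → g' ≠ 0 → g' ≠ z → ¬ ConformalTo g' z :=
        fun h => hp ⟨hk, hz0, h⟩
      push_neg at hC
      obtain ⟨g, hgk, hg0, hgz, hgc⟩ := hC
      -- weight of g is strictly smaller
      obtain ⟨j0, hj0⟩ : ∃ j, g j ≠ z j := by
        by_contra h; push_neg at h; exact hgz (funext h)
      have hwg : ∑ j, (g j).natAbs < ∑ j, (z j).natAbs := by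
        refine Finset.sum_lt_sum (fun j _ => ?_) ⟨j0, Finset.mem_univ j0, ?_⟩
        · have := (hgc j).2
          rw [Int.abs_eq_natAbs, Int.abs_eq_natAbs] at this
          exact_mod_cast this
        · have := conf_strict (hgc j0).1 (hgc j0).2 hj0
          rw [Int.abs_eq_natAbs, Int.abs_eq_natAbs] at this
          exact_mod_cast this
      -- z - g : kernel, nonzero, conformal, smaller weight
      have hzk : A.mulVec (z - g) = 0 := by
        rw [Matrix.mulVec_sub, hk, hgk, sub_zero]
      have hzg0 : z - g ≠ 0 := fun h => hgz ((sub_eq_zero.mp h).symm)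
      have hzgc : ConformalTo (z - g) z := fun j =>
        ⟨conf_sub_sign (hgc j).1 (hgc j).2, conf_sub_abs (hgc j).1 (hgc j).2⟩
      obtain ⟨j1, hj1⟩ : ∃ j, g j ≠ 0 := by
        by_contra h; push_neg at h; exact hg0 (funext h)
      have hwzg : ∑ j, ((z - g) j).natAbs < ∑ j, (z j).natAbs := by
        refine Finset.sum_lt_sum (fun j _ => ?_) ⟨j1, Finset.mem_univ j1, ?_⟩
        · have := conf_sub_abs (hgc j).1 (hgc j).2
          rw [Int.abs_eq_natAbs, Int.abs_eq_natAbs] at this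
          simpa using (by exact_mod_cast this : (z j - g j).natAbs ≤ (z j).natAbs)
        · have := conf_sub_lt (hgc j1).1 (hgc j1).2 hj1
          rw [Int.abs_eq_natAbs, Int.abs_eq_natAbs] at this
          simpa using (by exact_mod_cast this : (z j1 - g j1).natAbs < (z j1).natAbs)
      obtain ⟨r1, gs1, hsum1, hprim1⟩ := ih g (by omega) hgk hg0
      obtain ⟨r2, gs2, hsum2, hprim2⟩ := ih (z - g) (by omega) hzk hzg0
      refine ⟨r1 + r2, Fin.append gs1 gs2, ?_, ?_⟩
      · rw [Fin.sum_univ_add]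
        simp only [Fin.append_left, Fin.append_right]
        rw [← hsum1, ← hsum2]; ring
      · intro i
        refine Fin.addCases (fun i => ?_) (fun i => ?_) i
        · rw [Fin.append_left]
          exact ⟨(hprim1 i).1, ((hprim1 i).2).trans' hgc⟩
        · rw [Fin.append_right]
          exact ⟨(hprim2 i).1, ((hprim2 i).2).trans' hzgc⟩

theorem stmt_12 {d m : ℕ} (A : Matrix (Fin d) (Fin m) ℤ)
    (z : Fin m → ℤ) (hz : A.mulVec z = 0) (hz0 : z ≠ 0) :
    ∃ (r : ℕ) (gs : Fin r → Fin m → ℤ),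
      z = ∑ i, gs i ∧ ∀ i, PrimitiveKer A (gs i) ∧ ConformalTo (gs i) z :=
  key A _ z le_rfl hz hz0
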